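/- arXiv:1903.11497 — 2 statements merged into one kernel-verified Lean document; each statement's English description precedes it below -/
import Mathlib

section
/- Let F ⊆ E ⊆ L and F ⊆ K ⊆ L be finite fields with |F| = q, [E : F] = n, [K : F] = m, and [L : F] = lcm(n, m). Let η : Eˣ → ℂˣ be an F-regular multiplicative character. Then for every integer i ≥ 0, the character ξ : Lˣ → ℂˣ defined by ξ(a) = η(N_{L/E}(a)^{q^i}) is K-regular; that is, the characters a ↦ ξ(a^{q^{mj}}) for 0 ≤ j ≤ n/gcd(n,m) − 1 are pairwise distinct (note [L : K] = n/gcd(n,m)). -/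
/-!
Statement 4: if `η` is an `F`-regular character of `Eˣ`, then for every `i ≥ 0` the
character `ξ(a) = η(N_{L/E}(a)^{q^i})` of `Lˣ` is `K`-regular, where
`[E:F] = n`, `[K:F] = m`, `[L:F] = lcm(n,m)`.
-/


open Finset Subgroup

lemma geom_nat {Q : ℕ} (hQ : 1 ≤ Q) (d : ℕ) :
    (Q - 1) * (∑ i ∈ Finset.range d, Q ^ i) = Q ^ d - 1 := by
  induction d with
  | zero => simp
  | succ t ih =>
    rw [Finset.sum_range_succ, Nat.mul_add, ih, pow_succ, Nat.sub_one_mul]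
    have h1 : 1 ≤ Q ^ t := Nat.one_le_pow _ _ hQ
    have h2 : Q ^ t ≤ Q ^ t * Q := Nat.le_mul_of_pos_right _ hQ
    have h3 : Q * Q ^ t = Q ^ t * Q := mul_comm _ _
    omega

lemma norm_units_surjective (E L : Type*) [Field E] [Fintype E] [Field L] [Fintype L]
    [Algebra E L] : Function.Surjective (Units.map (Algebra.norm E : L →* E)) := by
  classical
  set Q := Fintype.card E with hQdef
  set d := Module.finrank E L with hddef
  have hQ2 : 1 < Q := Fintype.one_lt_card
  have hd0 : 0 < d := Module.finrank_pos
  obtain ⟨p, hcharp⟩ := CharP.exists E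
  haveI : CharP E p := hcharp
  haveI hp : Fact p.Prime := ⟨(CharP.char_is_prime E p)⟩
  haveI : CharP L p := charP_of_injective_algebraMap (algebraMap E L).injective p
  obtain ⟨k, hpk, hk⟩ := FiniteField.card E p
  -- Frobenius as an E-algebra automorphism of L
  let φ₀ : L →ₐ[E] L :=
    { toRingHom := iterateFrobenius L p k
      commutes' := fun e => by
        show iterateFrobenius L p (k : ℕ) ((algebraMap E L) e) = (algebraMap E L) e
        rw [iterateFrobenius_def, ← map_pow, ← hk, FiniteField.pow_card] }
  have hbij : Function.Bijective φ₀ := Finite.injective_iff_bijective.mp φ₀.toRingHom.injective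
  let φ : L ≃ₐ[E] L := AlgEquiv.ofBijective φ₀ hbij
  have hφ : ∀ x : L, φ x = x ^ Q := fun x => by
    have h0 : φ x = iterateFrobenius L p (k : ℕ) x := rfl
    rw [h0, iterateFrobenius_def, hQdef, hk]
  have hφpow : ∀ (i : ℕ) (x : L), (φ ^ i) x = x ^ Q ^ i := by
    intro i
    induction i with
    | zero => intro x; simp
    | succ t ih =>
      intro x
      rw [pow_succ, AlgEquiv.mul_apply, hφ, ih, ← pow_mul, ← pow_succ']
  have hcardL : Fintype.card L = Q ^ d := Module.card_eq_pow_finrank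
  have hcardG : Fintype.card (L ≃ₐ[E] L) = d := by
    rw [← Nat.card_eq_fintype_card]; exact IsGalois.card_aut_eq_finrank E L
  obtain ⟨g, hg⟩ := IsCyclic.exists_generator (α := Lˣ)
  have hordg : orderOf g = Q ^ d - 1 := by
    rw [orderOf_eq_card_of_forall_mem_zpowers hg, Nat.card_eq_fintype_card, Fintype.card_units, hcardL]
  -- the order of φ is d
  have hordφ : orderOf φ = d := by
    have ht : orderOf φ ∣ d := hcardG ▸ orderOf_dvd_card
    have ht0 : 0 < orderOf φ := orderOf_pos φ
    have h1 : (g : L) ^ Q ^ orderOf φ = (g : L) := by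
      have := hφpow (orderOf φ) (g : L)
      rw [pow_orderOf_eq_one φ, AlgEquiv.one_apply] at this
      exact this.symm
    have h2 : g ^ Q ^ orderOf φ = g ^ 1 := by
      ext; simpa [Units.val_pow_eq_pow_val] using h1
    have h3 : Q ^ orderOf φ ≡ 1 [MOD orderOf g] := (pow_eq_pow_iff_modEq.mp h2)
    have h4 : orderOf g ∣ Q ^ orderOf φ - 1 :=
      (Nat.modEq_iff_dvd' (Nat.one_le_pow _ _ (by omega))).mp h3.symm
    rw [hordg] at h4
    have hx1 : 1 < Q ^ orderOf φ := Nat.one_lt_pow ht0.ne' hQ2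
    have hx2 : 1 ≤ Q ^ d := Nat.one_le_pow _ _ (by omega)
    have h5 : Q ^ d - 1 ≤ Q ^ orderOf φ - 1 := Nat.le_of_dvd (by omega) h4
    have h6 : Q ^ d ≤ Q ^ orderOf φ := by omega
    have h7 : d ≤ orderOf φ := (Nat.pow_le_pow_iff_right hQ2).mp h6
    exact le_antisymm (Nat.le_of_dvd hd0 ht) h7
  -- every automorphism is a power of φ
  have ebij : Function.Bijective (fun i : Fin d => φ ^ (i : ℕ)) := by
    rw [Fintype.bijective_iff_injective_and_card, Fintype.card_fin, hcardG]
    refine ⟨fun a b hab => ?_, rfl⟩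
    have := pow_inj_mod.mp hab
    rw [hordφ, Nat.mod_eq_of_lt a.2, Nat.mod_eq_of_lt b.2] at this
    exact Fin.ext this
  set s : ℕ := ∑ i ∈ Finset.range d, Q ^ i with hsdef
  have hs0 : 0 < s := by
    rw [hsdef]
    exact Finset.sum_pos (fun i _ => pow_pos (by omega) _)
      (Finset.nonempty_range_iff.mpr hd0.ne')
  have hnorm : ∀ x : L, algebraMap E L (Algebra.norm E x) = x ^ s := by
    intro x
    rw [Algebra.norm_eq_prod_automorphisms,
      ← (Equiv.ofBijective _ ebij).prod_comp fun σ : L ≃ₐ[E] L => σ x]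
    simp only [Equiv.ofBijective_apply, hφpow]
    rw [Finset.prod_pow_eq_pow_sum, hsdef, Fin.sum_univ_eq_sum_range]
  -- the norm of a generator generates Eˣ
  set h : Eˣ := Units.map (Algebra.norm E : L →* E) g with hhdef
  have hgeom : (Q - 1) * s = Q ^ d - 1 := geom_nat (by omega) d
  let ι : Eˣ →* Lˣ := Units.map (algebraMap E L : E →* L)
  have hιinj : Function.Injective ι := Units.map_injective (algebraMap E L).injective
  have hιh : ι h = g ^ s := by
    ext
    simpa [ι, hhdef] using hnorm (g : L)
  have hordh : orderOf h = Q - 1 := by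
    rw [← orderOf_injective ι hιinj h, hιh, orderOf_pow, hordg, ← hgeom,
      Nat.gcd_eq_right ⟨Q - 1, by ring⟩, Nat.mul_div_cancel _ hs0]
  have htop : Subgroup.zpowers h = ⊤ := by
    apply Subgroup.eq_top_of_card_eq
    rw [Nat.card_zpowers, hordh, Nat.card_eq_fintype_card, Fintype.card_units]
  intro y
  have hy : y ∈ Subgroup.zpowers h := htop ▸ Subgroup.mem_top y
  obtain ⟨kk, hkk⟩ := hy
  refine ⟨g ^ kk, ?_⟩
  rw [map_zpow, ← hhdef]
  exact hkk


namespace Stmt4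


theorem norm_inflation_regular
    (F : Type*) [Field F] [Fintype F]
    (L : Type*) [Field L] [Fintype L] [Algebra F L]
    (q n m : ℕ) (hq : Fintype.card F = q)
    (E K : IntermediateField F L)
    (hE : Module.finrank F ↥E = n) (hK : Module.finrank F ↥K = m)
    (hL : Module.finrank F L = Nat.lcm n m)
    (η : (↥E)ˣ →* ℂˣ)
    (hreg : ∀ i < n, ∀ j < n, (∀ x : (↥E)ˣ, η (x ^ q ^ i) = η (x ^ q ^ j)) → i = j) :
    ∀ i : ℕ, ∀ j < n / Nat.gcd n m, ∀ j' < n / Nat.gcd n m,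
      (∀ a : Lˣ,
          η ((Units.map (Algebra.norm ↥E) (a ^ q ^ (m * j))) ^ q ^ i) =
            η ((Units.map (Algebra.norm ↥E) (a ^ q ^ (m * j'))) ^ q ^ i)) →
      j = j' := by
  intro i j hj j' hj' H
  haveI : Fintype ↥E := Fintype.ofFinite _
  have hq2 : 2 ≤ q := hq ▸ Fintype.one_lt_card
  have hn0 : 0 < n := hE ▸ Module.finrank_pos
  have hcardE : Fintype.card ↥E = q ^ n := by rw [← hq, ← hE]; exact Module.card_eq_pow_finrank
  -- reduction of exponents modulo n
  have key : ∀ (x : (↥E)ˣ) (k : ℕ), x ^ q ^ k = x ^ q ^ (k % n) := by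
    intro x k
    rw [pow_eq_pow_iff_modEq]
    have h1 : orderOf x ∣ q ^ n - 1 := by
      have h0 := orderOf_dvd_natCard x
      rwa [Nat.card_units, Nat.card_eq_fintype_card, hcardE] at h0
    have h2 : q ^ n ≡ 1 [MOD q ^ n - 1] :=
      ((Nat.modEq_iff_dvd' (Nat.one_le_pow _ _ (by omega))).mpr dvd_rfl).symm
    have h3 : q ^ k ≡ q ^ (k % n) [MOD q ^ n - 1] := by
      have hsplit : q ^ k = (q ^ n) ^ (k / n) * q ^ (k % n) := by
        rw [← pow_mul, ← pow_add, Nat.div_add_mod]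
      calc q ^ k = (q ^ n) ^ (k / n) * q ^ (k % n) := hsplit
        _ ≡ 1 ^ (k / n) * q ^ (k % n) [MOD q ^ n - 1] := (h2.pow _).mul_right _
        _ = q ^ (k % n) := by rw [one_pow, one_mul]
    exact h3.of_dvd h1
  -- transfer the hypothesis along the surjective norm map
  have H2 : ∀ x : (↥E)ˣ,
      η (x ^ q ^ ((m * j + i) % n)) = η (x ^ q ^ ((m * j' + i) % n)) := by
    intro x
    obtain ⟨a, ha⟩ := norm_units_surjective ↥E L x
    have hH := H a
    have e1 : (Units.map (Algebra.norm ↥E)) (a ^ q ^ (m * j)) = x ^ q ^ (m * j) := by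
      rw [map_pow, ha]
    have e2 : (Units.map (Algebra.norm ↥E)) (a ^ q ^ (m * j')) = x ^ q ^ (m * j') := by
      rw [map_pow, ha]
    rw [e1, e2, ← pow_mul, ← pow_mul, ← pow_add, ← pow_add,
      key x (m * j + i), key x (m * j' + i)] at hH
    exact hH
  have hmods : (m * j + i) % n = (m * j' + i) % n :=
    hreg _ (Nat.mod_lt _ hn0) _ (Nat.mod_lt _ hn0) H2
  have h3 : m * j ≡ m * j' [MOD n] := Nat.ModEq.add_right_cancel' i hmods
  have h4 : j ≡ j' [MOD n / Nat.gcd n m] := Nat.ModEq.cancel_left_div_gcd hn0 h3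
  have h5 : j % (n / Nat.gcd n m) = j' % (n / Nat.gcd n m) := h4
  rwa [Nat.mod_eq_of_lt hj, Nat.mod_eq_of_lt hj'] at h5

end Stmt4
end

section
/- Let k be a field, G a group, H and K subgroups of G, and (σ, W) a k-linear representation of H. For g ∈ G let ᵍH = gHg⁻¹ and let ᵍσ be the representation of ᵍH on W defined by ᵍσ(ghg⁻¹) = σ(h). Let R ⊆ G be a set of representatives of the double cosets K\G/H. Then there is an isomorphism of k-linear representations of K: Res^G_K Ind_H^G σ ≅ ⊕_{g ∈ R} Ind_{K ∩ ᵍH}^{K} (Res^{ᵍH}_{K ∩ ᵍH} ᵍσ), where Ind_H^G σ denotes the induced representation k[G] ⊗_{k[H]} W with G acting by left multiplication on k[G], and Res denotes restriction of a representation to a subgroup. -/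
/-!
Statement 5: Mackey's restriction formula
`Res^G_K Ind_H^G σ ≅ ⊕_{g ∈ K\G/H} Ind_{K ∩ ᵍH}^K (Res ᵍσ)`,
where `Ind_H^G σ` is realized as `k[G] ⊗_{k[H]} W`, i.e. as the quotient of `k[G] ⊗_k W`
by the relations `(a·h) ⊗ w = a ⊗ σ(h)w` (`h ∈ H`), with `G` acting by left multiplication
on the `k[G]` factor.
-/

open TensorProduct BigOperators DirectSum

namespace Stmt5

variable {k : Type*} [Field k] {G : Type*} [Group G]

section Ind

variable (H : Subgroup G) {W : Type*} [AddCommGroup W] [Module k W]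
  (σ : Representation k H W)

/-- The submodule of `k[G] ⊗_k W` spanned by the relations `(a * h) ⊗ w - a ⊗ σ(h)w`,
`h ∈ H`.  Quotienting by it realizes `k[G] ⊗_{k[H]} W`. -/
noncomputable def indRel : Submodule k (MonoidAlgebra k G ⊗[k] W) :=
  Submodule.span k {z | ∃ (a : MonoidAlgebra k G) (h : H) (w : W),
    z = (a * MonoidAlgebra.single (h : G) 1) ⊗ₜ[k] w - a ⊗ₜ[k] (σ h w)}

/-- The underlying space of the induced representation `Ind_H^G σ = k[G] ⊗_{k[H]} W`. -/
noncomputable abbrev IndV := (MonoidAlgebra k G ⊗[k] W) ⧸ indRel H σ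

/-- Left multiplication by `g` on the `k[G]` factor of `k[G] ⊗_k W`. -/
noncomputable def indAux (g : G) :
    (MonoidAlgebra k G ⊗[k] W) →ₗ[k] (MonoidAlgebra k G ⊗[k] W) :=
  LinearMap.rTensor W (LinearMap.mulLeft k (MonoidAlgebra.single g 1))

lemma indRel_le (g : G) :
    indRel H σ ≤ (indRel H σ).comap (indAux (k := k) (G := G) g (W := W)) := by
  rw [indRel, Submodule.span_le]
  rintro z ⟨a, h, w, rfl⟩
  refine Submodule.mem_comap.2 ?_
  have hcalc : indAux (k := k) (G := G) g (W := W)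
      ((a * MonoidAlgebra.single (h : G) 1) ⊗ₜ[k] w - a ⊗ₜ[k] (σ h w))
      = ((MonoidAlgebra.single g 1 * a) * MonoidAlgebra.single (h : G) 1) ⊗ₜ[k] w
        - (MonoidAlgebra.single g 1 * a) ⊗ₜ[k] (σ h w) := by
    simp [indAux, mul_assoc]
  rw [hcalc]
  exact Submodule.subset_span ⟨MonoidAlgebra.single g 1 * a, h, w, rfl⟩

/-- The induced representation `Ind_H^G σ` on `k[G] ⊗_{k[H]} W`:
`g` acts by left multiplication on the `k[G]` factor. -/
noncomputable def indRep : Representation k G (IndV H σ) where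
  toFun g := Submodule.mapQ (indRel H σ) (indRel H σ) (indAux g) (indRel_le H σ g)
  map_one' := by
    apply Submodule.linearMap_qext
    refine LinearMap.ext fun z => ?_
    have hAux : indAux (k := k) (G := G) (1 : G) (W := W) = LinearMap.id := by
      unfold indAux
      rw [show MonoidAlgebra.single (1 : G) (1 : k) = 1 from
          (MonoidAlgebra.one_def).symm,
        LinearMap.mulLeft_one, LinearMap.rTensor_id]
    simp [Submodule.mapQ_apply, hAux]
  map_mul' g₁ g₂ := by
    apply Submodule.linearMap_qext
    refine LinearMap.ext fun z => ?_
    have hAux : indAux (k := k) (G := G) (g₁ * g₂) (W := W)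
        = (indAux (k := k) (G := G) g₁ (W := W)).comp
            (indAux (k := k) (G := G) g₂ (W := W)) := by
      unfold indAux
      rw [show MonoidAlgebra.single (g₁ * g₂) (1 : k)
            = MonoidAlgebra.single g₁ 1 * MonoidAlgebra.single g₂ 1 by
          rw [MonoidAlgebra.single_mul_single, one_mul],
        LinearMap.mulLeft_mul, LinearMap.rTensor_comp]
    simp [Submodule.mapQ_apply, hAux, Module.End.mul_apply]

end Ind

/-- The conjugate subgroup `ᵍH = g H g⁻¹`. -/
def conjSubgroup (g : G) (H : Subgroup G) : Subgroup G where
  carrier := {x | g⁻¹ * x * g ∈ H}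
  one_mem' := by simpa using H.one_mem
  mul_mem' := fun {a b} ha hb => by simpa [mul_assoc] using H.mul_mem ha hb
  inv_mem' := fun {a} ha => by simpa [mul_assoc] using H.inv_mem ha

/-- The isomorphism `ᵍH ≅ H`, `x ↦ g⁻¹ x g`. -/
def conjHom (g : G) (H : Subgroup G) : ↥(conjSubgroup g H) →* ↥H :=
  MonoidHom.mk' (fun x => ⟨g⁻¹ * (x : G) * g, x.2⟩)
    (fun a b => by
      ext
      simp [mul_assoc])

/-- The conjugate representation `ᵍσ` of `ᵍH` on `W`, `ᵍσ(g h g⁻¹) = σ(h)`,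
i.e. `ᵍσ(x) = σ(g⁻¹ x g)`. -/
noncomputable def conjRep (H : Subgroup G) {W : Type*} [AddCommGroup W] [Module k W]
    (σ : Representation k H W) (g : G) : Representation k (conjSubgroup g H) W :=
  MonoidHom.comp σ (conjHom g H)

/-- The inclusion `S ∩ K = S.subgroupOf K → S`. -/
def subgroupOfHom (S K : Subgroup G) : ↥(S.subgroupOf K) →* ↥S :=
  MonoidHom.mk' (fun x => ⟨((x : K) : G), x.2⟩) (fun a b => rfl)

/-- The representation `Res^{ᵍH}_{K ∩ ᵍH} ᵍσ` of the subgroup `K ∩ ᵍH` of `K`. -/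
noncomputable def mackeySummandRep (H K : Subgroup G) {W : Type*} [AddCommGroup W]
    [Module k W] (σ : Representation k H W) (g : G) :
    Representation k ((conjSubgroup g H).subgroupOf K) W :=
  MonoidHom.comp (conjRep H σ g) (subgroupOfHom (conjSubgroup g H) K)

section MackeyProof

variable {k : Type*} [Field k] {G : Type*} [Group G]

lemma mk_rel (H' : Subgroup G) {W' : Type*} [AddCommGroup W']
    [Module k W'] (σ' : Representation k H' W') (a : MonoidAlgebra k G) (h : H') (w : W') :
    (Submodule.Quotient.mk ((a * MonoidAlgebra.single (h : G) 1) ⊗ₜ[k] w) : IndV H' σ')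
      = Submodule.Quotient.mk (a ⊗ₜ[k] (σ' h w)) := by
  rw [Submodule.Quotient.eq]
  exact Submodule.subset_span ⟨a, h, w, rfl⟩

lemma indRep_mk (H' : Subgroup G) {W' : Type*} [AddCommGroup W']
    [Module k W'] (σ' : Representation k H' W') (g : G) (z : MonoidAlgebra k G ⊗[k] W') :
    indRep H' σ' g (Submodule.Quotient.mk z)
      = Submodule.Quotient.mk (indAux (k := k) (G := G) g (W := W') z) := rfl

lemma indAux_single (g a : G) (s : k) {W' : Type*} [AddCommGroup W'] [Module k W'] (w : W') :
    indAux (k := k) (G := G) g (W := W') (MonoidAlgebra.single a s ⊗ₜ[k] w)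
      = MonoidAlgebra.single (g * a) s ⊗ₜ[k] w := by
  simp [indAux, MonoidAlgebra.single_mul_single]

variable (H K : Subgroup G) {W : Type*} [AddCommGroup W] [Module k W]
  (σ : Representation k H W)

lemma mackeySummandRep_apply' (g : G) (x : (conjSubgroup g H).subgroupOf K)
    (hx : g⁻¹ * ((x : K) : G) * g ∈ H) (w : W) :
    mackeySummandRep H K σ g x w = σ ⟨g⁻¹ * ((x : K) : G) * g, hx⟩ w := rfl

noncomputable def elem (g : G) (c : K) (w : W) :
    IndV ((conjSubgroup g H).subgroupOf K) (mackeySummandRep H K σ g) :=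
  Submodule.Quotient.mk (MonoidAlgebra.single c (1 : k) ⊗ₜ[k] w)

lemma elem_eq (g : G) (c c' : K) (h h' : H) (w : W)
    (hcc : (c : G) * g * h = (c' : G) * g * h') :
    elem H K σ g c (σ h w) = elem H K σ g c' (σ h' w) := by
  have hc' : (c' : G) = (c : G) * g * h * (h' : G)⁻¹ * g⁻¹ := by
    rw [hcc]; group
  have hmemH : g⁻¹ * ((c⁻¹ * c' : K) : G) * g ∈ H := by
    push_cast
    rw [hc']
    have : g⁻¹ * ((c : G)⁻¹ * ((c : G) * g * (h : G) * ((h' : G))⁻¹ * g⁻¹)) * g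
        = (h : G) * ((h' : G))⁻¹ := by group
    rw [this]
    exact H.mul_mem h.2 (H.inv_mem h'.2)
  have hmem : (c⁻¹ * c' : K) ∈ (conjSubgroup g H).subgroupOf K :=
    Subgroup.mem_subgroupOf.mpr hmemH
  have hel : (⟨g⁻¹ * ((c⁻¹ * c' : K) : G) * g, hmemH⟩ : H) * h' = h := by
    ext
    push_cast
    rw [hc']; group
  have hsingle : (MonoidAlgebra.single c' (1 : k) : MonoidAlgebra k K)
      = MonoidAlgebra.single c 1
        * MonoidAlgebra.single (((⟨c⁻¹ * c', hmem⟩ : (conjSubgroup g H).subgroupOf K) : K)) 1 := by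
    rw [MonoidAlgebra.single_mul_single, one_mul]
    congr 1
    simp
  have hact : mackeySummandRep H K σ g ⟨c⁻¹ * c', hmem⟩ (σ h' w) = σ h w := by
    rw [mackeySummandRep_apply' H K σ g ⟨c⁻¹ * c', hmem⟩ hmemH, ← Module.End.mul_apply,
      ← map_mul, hel]
  show Submodule.Quotient.mk _ = Submodule.Quotient.mk _
  rw [hsingle, mk_rel ((conjSubgroup g H).subgroupOf K) (mackeySummandRep H K σ g)
    (MonoidAlgebra.single c 1) ⟨c⁻¹ * c', hmem⟩ (σ h' w), hact]

lemma indRep_elem (g : G) (x c : K) (v : W) :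
    indRep ((conjSubgroup g H).subgroupOf K) (mackeySummandRep H K σ g) x
      (elem H K σ g c v) = elem H K σ g (x * c) v := by
  rw [elem, indRep_mk, indAux_single]
  rfl

section Choice

variable {R : Set G}
variable (hR : ∀ x : G, ∃! r, r ∈ R ∧ ∃ c ∈ K, ∃ h ∈ H, x = c * r * h)

noncomputable def rfun (g : G) : R := ⟨(hR g).choose, (hR g).choose_spec.1.1⟩

noncomputable def cfun (g : G) : K :=
  ⟨(hR g).choose_spec.1.2.choose, (hR g).choose_spec.1.2.choose_spec.1⟩

noncomputable def hfun (g : G) : H :=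
  ⟨(hR g).choose_spec.1.2.choose_spec.2.choose,
   (hR g).choose_spec.1.2.choose_spec.2.choose_spec.1⟩

lemma gdecomp (g : G) : g = (cfun H K hR g : G) * (rfun H K hR g : G) * (hfun H K hR g : G) :=
  (hR g).choose_spec.1.2.choose_spec.2.choose_spec.2

lemma rfun_eq (g : G) (r : R) (c : K) (h : H) (hg : g = (c : G) * r * h) :
    rfun H K hR g = r := by
  refine Subtype.ext ?_
  exact ((hR g).choose_spec.2 (r : G) ⟨r.2, c, c.2, h, h.2, hg⟩).symm


variable [DecidableEq ↥R]

/-- `w ↦ class of single c ⊗ w`, as a linear map. -/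
noncomputable def elemL (g : G) (c : K) :
    W →ₗ[k] IndV ((conjSubgroup g H).subgroupOf K) (mackeySummandRep H K σ g) :=
  (indRel ((conjSubgroup g H).subgroupOf K) (mackeySummandRep H K σ g)).mkQ
    ∘ₗ (TensorProduct.mk k (MonoidAlgebra k K) W (MonoidAlgebra.single c 1))

lemma elemL_apply (g : G) (c : K) (w : W) : elemL H K σ g c w = elem H K σ g c w := rfl

noncomputable def fwd0 : (MonoidAlgebra k G ⊗[k] W) →ₗ[k]
    ⨁ r : R, IndV ((conjSubgroup (r : G) H).subgroupOf K) (mackeySummandRep H K σ (r : G)) :=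
  TensorProduct.lift
    (((Finsupp.lift (W →ₗ[k] ⨁ r : R, IndV ((conjSubgroup (r : G) H).subgroupOf K)
        (mackeySummandRep H K σ (r : G))) k G fun g =>
      (DirectSum.lof k R (fun r => IndV ((conjSubgroup (r : G) H).subgroupOf K)
          (mackeySummandRep H K σ (r : G))) (rfun H K hR g))
        ∘ₗ elemL H K σ (rfun H K hR g : G) (cfun H K hR g)
        ∘ₗ (σ (hfun H K hR g))) ∘ₗ (MonoidAlgebra.coeffLinearEquiv k).toLinearMap :
      MonoidAlgebra k G →ₗ[k] _))

lemma fwd0_apply_single (g : G) (s : k) (w : W) :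
    fwd0 H K σ hR (MonoidAlgebra.single g s ⊗ₜ[k] w)
      = s • DirectSum.lof k R (fun r => IndV ((conjSubgroup (r : G) H).subgroupOf K)
          (mackeySummandRep H K σ (r : G))) (rfun H K hR g)
          (elem H K σ (rfun H K hR g : G) (cfun H K hR g) (σ (hfun H K hR g) w)) := by
  rw [fwd0, TensorProduct.lift.tmul]
  rw [LinearMap.comp_apply]
  erw [Finsupp.lift_apply]
  erw [Finsupp.sum_single_index (by simp)]
  simp [elemL_apply]

lemma fwd0_decomp (r : R) (c : K) (h : H) (s : k) (w : W) :
    fwd0 H K σ hR (MonoidAlgebra.single ((c : G) * r * h) s ⊗ₜ[k] w)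
      = s • DirectSum.lof k R (fun r => IndV ((conjSubgroup (r : G) H).subgroupOf K)
          (mackeySummandRep H K σ (r : G))) r (elem H K σ (r : G) c (σ h w)) := by
  have hr : rfun H K hR ((c : G) * r * h) = r := rfun_eq H K hR _ r c h rfl
  have hd := gdecomp H K hR ((c : G) * r * h)
  rw [hr] at hd
  rw [fwd0_apply_single, hr,
    elem_eq H K σ (r : G) (cfun H K hR _) c (hfun H K hR _) h w hd.symm]

noncomputable instance instACGSum : AddCommGroup (⨁ r : R, IndV ((conjSubgroup (r : G) H).subgroupOf K) (mackeySummandRep H K σ (r : G))) := by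
  exact @DirectSum.instAddCommGroup R (fun r => IndV ((conjSubgroup (r : G) H).subgroupOf K) (mackeySummandRep H K σ (r : G))) (fun r => inferInstance)

lemma indRel_le_ker_fwd0 :
    indRel H σ ≤ LinearMap.ker (fwd0 H K σ hR (W := W)) := by
  rw [indRel, Submodule.span_le]
  rintro z ⟨a, h, w, rfl⟩
  rw [SetLike.mem_coe, LinearMap.mem_ker, map_sub, sub_eq_zero]
  have key : ∀ (g : G) (s : k),
      fwd0 H K σ hR ((MonoidAlgebra.single g s * MonoidAlgebra.single (h : G) 1) ⊗ₜ[k] w)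
        = fwd0 H K σ hR (MonoidAlgebra.single g s ⊗ₜ[k] (σ h w)) := by
    intro g s
    rw [MonoidAlgebra.single_mul_single, mul_one]
    have hd := gdecomp H K hR g
    have hd2 : g * (h : G) = (cfun H K hR g : G) * (rfun H K hR g : G)
        * ((hfun H K hR g * h : H) : G) := by
      push_cast; rw [← mul_assoc, ← hd]
    have e1 : fwd0 H K σ hR (MonoidAlgebra.single (g * (h : G)) s ⊗ₜ[k] w)
        = s • DirectSum.lof k R (fun r => IndV ((conjSubgroup (r : G) H).subgroupOf K)
            (mackeySummandRep H K σ (r : G))) (rfun H K hR g)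
            (elem H K σ (rfun H K hR g : G) (cfun H K hR g)
              (σ (hfun H K hR g * h) w)) := by
      rw [hd2, fwd0_decomp]
    have e2 : fwd0 H K σ hR (MonoidAlgebra.single g s ⊗ₜ[k] (σ h w))
        = s • DirectSum.lof k R (fun r => IndV ((conjSubgroup (r : G) H).subgroupOf K)
            (mackeySummandRep H K σ (r : G))) (rfun H K hR g)
            (elem H K σ (rfun H K hR g : G) (cfun H K hR g)
              (σ (hfun H K hR g) (σ h w))) := by
      conv_lhs => rw [hd]
      rw [fwd0_decomp]
    have e3 : σ (hfun H K hR g * h) w = σ (hfun H K hR g) (σ h w) := by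
      rw [map_mul]; rfl
    rw [e1, e2, e3]
  induction a using MonoidAlgebra.induction_linear with
  | zero => simp
  | add f g hf hg =>
      rw [add_mul, TensorProduct.add_tmul, TensorProduct.add_tmul, map_add, map_add, hf, hg]
  | single g s => exact key g s

noncomputable def fwd : IndV H σ →ₗ[k]
    ⨁ r : R, IndV ((conjSubgroup (r : G) H).subgroupOf K) (mackeySummandRep H K σ (r : G)) :=
  Submodule.liftQ _ (fwd0 H K σ hR) (indRel_le_ker_fwd0 H K σ hR)

lemma fwd_mk (z : MonoidAlgebra k G ⊗[k] W) :
    fwd H K σ hR (Submodule.Quotient.mk z) = fwd0 H K σ hR z := rfl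


noncomputable def bwd0 (g : G) : (MonoidAlgebra k ↥K ⊗[k] W) →ₗ[k] IndV H σ :=
  TensorProduct.lift
    (((Finsupp.lift (W →ₗ[k] IndV H σ) k ↥K fun c =>
      (indRel H σ).mkQ ∘ₗ (TensorProduct.mk k (MonoidAlgebra k G) W
        (MonoidAlgebra.single ((c : G) * g) 1))) ∘ₗ (MonoidAlgebra.coeffLinearEquiv k).toLinearMap :
          MonoidAlgebra k ↥K →ₗ[k] _))

lemma bwd0_apply_single (g : G) (c : K) (s : k) (w : W) :
    bwd0 H K σ g (MonoidAlgebra.single c s ⊗ₜ[k] w)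
      = s • (Submodule.Quotient.mk (MonoidAlgebra.single ((c : G) * g) (1 : k) ⊗ₜ[k] w)
          : IndV H σ) := by
  rw [bwd0, TensorProduct.lift.tmul]
  rw [LinearMap.comp_apply]
  erw [Finsupp.lift_apply]
  erw [Finsupp.sum_single_index (by simp)]
  simp

lemma indRel_le_ker_bwd0 (g : G) :
    indRel ((conjSubgroup g H).subgroupOf K) (mackeySummandRep H K σ g)
      ≤ LinearMap.ker (bwd0 H K σ g) := by
  rw [indRel, Submodule.span_le]
  rintro z ⟨a, x, w, rfl⟩
  rw [SetLike.mem_coe, LinearMap.mem_ker, map_sub, sub_eq_zero]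
  have hxH : g⁻¹ * ((x : K) : G) * g ∈ H := x.2
  have key : ∀ (c : K) (s : k),
      bwd0 H K σ g ((MonoidAlgebra.single c s * MonoidAlgebra.single ((x : K) : ↥K) 1) ⊗ₜ[k] w)
        = bwd0 H K σ g (MonoidAlgebra.single c s ⊗ₜ[k]
            (mackeySummandRep H K σ g x w)) := by
    intro c s
    rw [MonoidAlgebra.single_mul_single, mul_one, bwd0_apply_single, bwd0_apply_single]
    congr 1
    have hmul : ((c * (x : K) : K) : G) * g
        = ((c : G) * g) * ((⟨g⁻¹ * ((x : K) : G) * g, hxH⟩ : H) : G) := by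
      push_cast; group
    rw [hmul, show (MonoidAlgebra.single (((c : G) * g)
          * ((⟨g⁻¹ * ((x : K) : G) * g, hxH⟩ : H) : G)) (1 : k) : MonoidAlgebra k G)
        = MonoidAlgebra.single ((c : G) * g) 1
          * MonoidAlgebra.single ((⟨g⁻¹ * ((x : K) : G) * g, hxH⟩ : H) : G) 1 by
        rw [MonoidAlgebra.single_mul_single, one_mul],
      mk_rel H σ (MonoidAlgebra.single ((c : G) * g) 1) ⟨g⁻¹ * ((x : K) : G) * g, hxH⟩ w,
      mackeySummandRep_apply' H K σ g x hxH w]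
  induction a using MonoidAlgebra.induction_linear with
  | zero => simp
  | add f g hf hg =>
      rw [add_mul, TensorProduct.add_tmul, TensorProduct.add_tmul, map_add, map_add, hf, hg]
  | single c s => exact key c s

variable (R) in
noncomputable def bwdSum [DecidableEq ↥R] :
    (⨁ r : R, IndV ((conjSubgroup (r : G) H).subgroupOf K)
      (mackeySummandRep H K σ (r : G))) →ₗ[k] IndV H σ :=
  DirectSum.toModule k R _ (fun r =>
    Submodule.liftQ _ (bwd0 H K σ (r : G)) (indRel_le_ker_bwd0 H K σ (r : G)))


lemma bwdSum_lof [DecidableEq ↥R] (r : R) (c : K) (v : W) :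
    bwdSum H K σ R (DirectSum.lof k R (fun r => IndV ((conjSubgroup (r : G) H).subgroupOf K)
        (mackeySummandRep H K σ (r : G))) r (elem H K σ (r : G) c v))
      = Submodule.Quotient.mk (MonoidAlgebra.single ((c : G) * (r : G)) (1 : k) ⊗ₜ[k] v) := by
  rw [bwdSum]
  erw [DirectSum.toModule_lof]
  show Submodule.liftQ _ (bwd0 H K σ (r : G)) _
      (Submodule.Quotient.mk (MonoidAlgebra.single c (1 : k) ⊗ₜ[k] v)) = _
  rw [Submodule.liftQ_apply, bwd0_apply_single, one_smul]

section Equiv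

variable [DecidableEq ↥R]

lemma bwd_fwd_apply (v : IndV H σ) : bwdSum H K σ R (fwd H K σ hR v) = v := by
  obtain ⟨z, rfl⟩ := Submodule.Quotient.mk_surjective _ v
  induction z using TensorProduct.induction_on with
  | zero => simp
  | add a b ha hb =>
      rw [Submodule.Quotient.mk_add, map_add, map_add, ha, hb]
  | tmul a w =>
      induction a using MonoidAlgebra.induction_linear with
      | zero => rw [TensorProduct.zero_tmul]; simp
      | add f f' hf hf' =>
          rw [TensorProduct.add_tmul, Submodule.Quotient.mk_add, map_add, map_add, hf, hf']
      | single g s =>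
          rw [fwd_mk, fwd0_apply_single, map_smul, bwdSum_lof]
          have hs : (MonoidAlgebra.single g s : MonoidAlgebra k G)
              = s • MonoidAlgebra.single g (1 : k) := by
            rw [MonoidAlgebra.smul_single', mul_one]
          rw [hs, ← TensorProduct.smul_tmul', Submodule.Quotient.mk_smul]
          congr 1
          have h1 : (MonoidAlgebra.single g (1 : k) : MonoidAlgebra k G)
              = MonoidAlgebra.single ((cfun H K hR g : G) * (rfun H K hR g : G)) 1
                * MonoidAlgebra.single ((hfun H K hR g : H) : G) 1 := by
            rw [MonoidAlgebra.single_mul_single, one_mul, ← gdecomp H K hR g]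
          conv_rhs => rw [h1]
          rw [mk_rel H σ (MonoidAlgebra.single ((cfun H K hR g : G) * (rfun H K hR g : G)) 1)
            (hfun H K hR g) w]

lemma fwd_bwd_apply (u : ⨁ r : R, IndV ((conjSubgroup (r : G) H).subgroupOf K)
    (mackeySummandRep H K σ (r : G))) :
    fwd H K σ hR (bwdSum H K σ R u) = u := by
  induction u using DirectSum.induction_on with
  | zero => simp
  | add a b ha hb => rw [map_add, map_add, ha, hb]
  | of r v =>
      rw [← DirectSum.lof_eq_of k]
      obtain ⟨z, rfl⟩ := Submodule.Quotient.mk_surjective _ v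
      induction z using TensorProduct.induction_on with
      | zero => simp
      | add a b ha hb =>
          rw [Submodule.Quotient.mk_add, map_add, map_add, map_add, ha, hb]
      | tmul a w =>
          induction a using MonoidAlgebra.induction_linear with
          | zero => rw [TensorProduct.zero_tmul]; simp
          | add f f' hf hf' =>
              rw [TensorProduct.add_tmul, Submodule.Quotient.mk_add, map_add, map_add, map_add,
                hf, hf']
          | single c s =>
              have hs : (MonoidAlgebra.single c s : MonoidAlgebra k ↥K)
                  = s • MonoidAlgebra.single c (1 : k) := by
                rw [MonoidAlgebra.smul_single', mul_one]
              rw [hs, ← TensorProduct.smul_tmul', Submodule.Quotient.mk_smul,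
                map_smul, map_smul, map_smul]
              congr 1
              show fwd H K σ hR (bwdSum H K σ R (DirectSum.lof k R _ r
                  (elem H K σ (r : G) c w)))
                = DirectSum.lof k R _ r (elem H K σ (r : G) c w)
              rw [bwdSum_lof, fwd_mk,
                show ((c : G) * (r : G)) = ((c : G) * (r : G) * (((1 : H) : H) : G)) by simp,
                fwd0_decomp H K σ hR r c 1 1 w]
              rw [map_one]
              exact one_smul k (_ : ⨁ r : R, IndV ((conjSubgroup (r : G) H).subgroupOf K)
                (mackeySummandRep H K σ (r : G)))

lemma mapRange_indRep_lof (x : K) (r : R)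
    (b : IndV ((conjSubgroup (r : G) H).subgroupOf K) (mackeySummandRep H K σ (r : G))) :
    DFinsupp.mapRange.linearMap (R := k)
        (fun j : R => (indRep ((conjSubgroup (j : G) H).subgroupOf K)
          (mackeySummandRep H K σ (j : G)) x))
        (DirectSum.lof k R (fun j : R => IndV ((conjSubgroup (j : G) H).subgroupOf K)
          (mackeySummandRep H K σ (j : G))) r b)
      = DirectSum.lof k R (fun j : R => IndV ((conjSubgroup (j : G) H).subgroupOf K)
          (mackeySummandRep H K σ (j : G))) r
          (indRep ((conjSubgroup (r : G) H).subgroupOf K)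
            (mackeySummandRep H K σ (r : G)) x b) := by
  show DFinsupp.mapRange
      (fun (j : R) y => (indRep ((conjSubgroup (j : G) H).subgroupOf K)
        (mackeySummandRep H K σ (j : G)) x) y)
      (fun j => map_zero _)
      (DFinsupp.single r b)
    = DFinsupp.single r ((indRep ((conjSubgroup (r : G) H).subgroupOf K)
        (mackeySummandRep H K σ (r : G)) x) b)
  exact DFinsupp.mapRange_single

lemma fwd_equiv_apply (x : K) (v : IndV H σ) :
    fwd H K σ hR (indRep H σ (x : G) v)
      = DFinsupp.mapRange.linearMap (R := k)
          (fun j : R => (indRep ((conjSubgroup (j : G) H).subgroupOf K)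
            (mackeySummandRep H K σ (j : G)) x))
          (fwd H K σ hR v) := by
  obtain ⟨z, rfl⟩ := Submodule.Quotient.mk_surjective _ v
  induction z using TensorProduct.induction_on with
  | zero => simp
  | add a b ha hb =>
      rw [Submodule.Quotient.mk_add, map_add, map_add, map_add, map_add, ha, hb]
  | tmul a w =>
      induction a using MonoidAlgebra.induction_linear with
      | zero => rw [TensorProduct.zero_tmul]; simp
      | add f f' hf hf' =>
          simp only [TensorProduct.add_tmul, Submodule.Quotient.mk_add, map_add, hf, hf']
      | single g s =>
          have hd := gdecomp H K hR g
          have hd' : (x : G) * g = ((x * cfun H K hR g : K) : G) * (rfun H K hR g : G)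
              * ((hfun H K hR g : H) : G) := by
            conv_lhs => rw [hd]
            push_cast
            group
          rw [indRep_mk, indAux_single, fwd_mk, fwd_mk, hd',
            fwd0_decomp]
          conv_rhs => rw [show (MonoidAlgebra.single g s : MonoidAlgebra k G)
            = MonoidAlgebra.single ((cfun H K hR g : G) * (rfun H K hR g : G)
              * ((hfun H K hR g : H) : G)) s from by rw [← hd]]
          rw [fwd0_decomp, map_smul, mapRange_indRep_lof, indRep_elem]

end Equiv

end Choice
end MackeyProof

/-- Mackey's restriction formula.  If `R` is a set of representatives of
the double cosets `K\G/H`, then there is a `k`-linear isomorphism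
`Res^G_K Ind_H^G σ ≅ ⊕_{r ∈ R} Ind_{K ∩ ʳH}^K (Res ʳσ)` which is `K`-equivariant. -/
theorem mackey_restriction
    (H K : Subgroup G) {W : Type*} [AddCommGroup W] [Module k W]
    (σ : Representation k H W)
    (R : Set G)
    (hR : ∀ x : G, ∃! r, r ∈ R ∧ ∃ c ∈ K, ∃ h ∈ H, x = c * r * h) :
    ∃ e : IndV H σ ≃ₗ[k]
        ⨁ r : R, IndV ((conjSubgroup (r : G) H).subgroupOf K)
          (mackeySummandRep H K σ (r : G)),
      ∀ (x : K) (v : IndV H σ) (r : R),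
        e (indRep H σ (x : G) v) r
          = indRep ((conjSubgroup (r : G) H).subgroupOf K)
              (mackeySummandRep H K σ (r : G)) x (e v r) := by
  classical
  refine ⟨LinearEquiv.ofLinear (fwd H K σ hR) (bwdSum H K σ R)
      (LinearMap.ext fun u => fwd_bwd_apply H K σ hR u)
      (LinearMap.ext fun v => bwd_fwd_apply H K σ hR v), ?_⟩
  intro x v r
  rw [LinearEquiv.ofLinear_apply, LinearEquiv.ofLinear_apply, fwd_equiv_apply H K σ hR x v]
  erw [DFinsupp.mapRange.linearMap_apply, DFinsupp.mapRange_apply]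

end Stmt5
end
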